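/- arXiv:2112.01311 — 5 statements merged into one kernel-verified Lean document; each statement's English description precedes it below -/
import Mathlib

section
/- A discrete Morse function on a finite simplicial complex attains its minimum on a critical 0-simplex. -/
/-- A finite abstract simplicial complex on vertex type `V`. -/
structure SComplex (V : Type*) [DecidableEq V] where
  faces : Finset (Finset V)
  nonempty : faces.Nonempty
  not_empty_mem : ∅ ∉ faces
  down_closed : ∀ σ ∈ faces, ∀ τ : Finset V, τ ⊆ σ → τ ≠ ∅ → τ ∈ faces

/-- A discrete Morse function: weakly increasing on faces, at most 2-to-1,
and equal values only on face/coface pairs. -/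
def IsDMF {V : Type*} [DecidableEq V] (K : SComplex V) (f : Finset V → ℝ) : Prop :=
  (∀ σ ∈ K.faces, ∀ τ ∈ K.faces, σ ⊆ τ → f σ ≤ f τ) ∧
  (∀ σ ∈ K.faces, ∀ τ ∈ K.faces, ∀ ρ ∈ K.faces,
      f σ = f τ → f τ = f ρ → σ = τ ∨ τ = ρ ∨ σ = ρ) ∧
  (∀ σ ∈ K.faces, ∀ τ ∈ K.faces, f σ = f τ → σ ≠ τ → σ ⊂ τ ∨ τ ⊂ σ)

/-- A simplex is critical if no other simplex shares its value. -/
def IsCritical {V : Type*} [DecidableEq V] (K : SComplex V) (f : Finset V → ℝ)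
    (σ : Finset V) : Prop :=
  σ ∈ K.faces ∧ ∀ τ ∈ K.faces, f τ = f σ → τ = σ

/-- A discrete Morse function on a finite simplicial complex attains its
minimum on a critical 0-simplex. -/
theorem stmt0 {V : Type*} [DecidableEq V] (K : SComplex V) (f : Finset V → ℝ)
    (hf : IsDMF K f) :
    ∃ σ ∈ K.faces, σ.card = 1 ∧ IsCritical K f σ ∧ ∀ τ ∈ K.faces, f σ ≤ f τ := by
  obtain ⟨hmono, htwo, hface⟩ := hf
  obtain ⟨σ₀, hσ₀, hmin⟩ := K.faces.exists_min_image f K.nonempty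
  have hσ₀ne : σ₀ ≠ ∅ := fun h => K.not_empty_mem (h ▸ hσ₀)
  obtain ⟨v, hv⟩ := Finset.nonempty_iff_ne_empty.2 hσ₀ne
  have hvmem : ({v} : Finset V) ∈ K.faces :=
    K.down_closed σ₀ hσ₀ {v} (Finset.singleton_subset_iff.2 hv) (Finset.singleton_ne_empty v)
  have hvmin : ∀ τ ∈ K.faces, f {v} ≤ f τ := by
    intro τ hτ
    exact le_trans (hmono _ hvmem _ hσ₀ (Finset.singleton_subset_iff.2 hv)) (hmin τ hτ)
  refine ⟨{v}, hvmem, Finset.card_singleton v, ⟨hvmem, ?_⟩, hvmin⟩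
  intro τ hτ hfτ
  by_contra hne
  rcases hface _ hvmem _ hτ hfτ.symm (fun h => hne h.symm) with h | h
  · obtain ⟨w, hwτ, hwv⟩ := (Finset.ssubset_iff_of_subset h.subset).1 h
    have hwv' : w ≠ v := fun h' => hwv (h' ▸ Finset.mem_singleton_self v)
    have hwmem : ({w} : Finset V) ∈ K.faces :=
      K.down_closed τ hτ {w} (Finset.singleton_subset_iff.2 hwτ) (Finset.singleton_ne_empty w)
    have hfw : f ({w} : Finset V) = f τ :=
      le_antisymm (hmono _ hwmem _ hτ (Finset.singleton_subset_iff.2 hwτ))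
        (hfτ ▸ hvmin _ hwmem)
    rcases htwo _ hvmem _ hτ _ hwmem hfτ.symm hfw.symm with h1 | h1 | h1
    · exact hne h1.symm
    · exact hwv' (Finset.mem_singleton.1 (h1 ▸ h.subset (Finset.mem_singleton_self v))).symm
    · exact hwv' (Finset.singleton_inj.1 h1.symm)
  · have := Finset.eq_empty_of_ssubset_singleton h
    exact K.not_empty_mem (this ▸ hτ)
end

section
/- The index Morse order on the nodes of a merge tree is a total order. -/
/-- Chirality: left or right. -/
inductive Chir : Type
  | L : Chir
  | R : Chir
  deriving DecidableEq

/-- The opposite chirality. -/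
def Chir.other : Chir → Chir
  | .L => .R
  | .R => .L

/-- A merge tree: a full rooted chiral binary tree, encoded by the set of its nodes,
each node being the list of chiralities along the shortest path from the root to it
(the root is the empty list). -/
structure MergeTree : Type where
  nodes : Finset (List Chir)
  root_mem : [] ∈ nodes
  prefix_closed : ∀ (w : List Chir) (x : Chir), w ++ [x] ∈ nodes → w ∈ nodes
  full : ∀ w : List Chir, w ++ [Chir.L] ∈ nodes ↔ w ++ [Chir.R] ∈ nodes

/-- An inner node: a node with (two) children. -/
def MergeTree.IsInner (T : MergeTree) (n : List Chir) : Prop :=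
  n ∈ T.nodes ∧ n ++ [Chir.L] ∈ T.nodes

/-- A leaf node: a node without children. -/
def MergeTree.IsLeaf (T : MergeTree) (n : List Chir) : Prop :=
  n ∈ T.nodes ∧ n ++ [Chir.L] ∉ T.nodes

/-- The chirality of a node (the root has chirality `L` by convention). -/
def chir (n : List Chir) : Chir := n.getLast?.getD Chir.L

/-- The number of inner nodes of a merge tree. -/
def MergeTree.innerCount (T : MergeTree) : ℕ :=
  (T.nodes.filter fun n => n ++ [Chir.L] ∈ T.nodes).card

/-- Auxiliary comparison of path words; the first argument is the letter at the last
position where the two words agreed (cf. "a_k = b_k"): under a common `L`, the letter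
`L` precedes `R`; under a common `R`, `R` precedes `L`; shorter words are larger. -/
def leAux : Chir → List Chir → List Chir → Prop
  | _, _, [] => True
  | _, [], _ :: _ => False
  | last, x :: a, y :: b => if x = y then leAux x a b else x = last

/-- The sublevel-connected Morse order (comparison of path words; every path word
starts with the letter `L` for the root). -/
def scLe (a b : List Chir) : Prop := leAux Chir.L a b

/-- The index Morse order: leaves below inner nodes; among leaves and among inner
nodes, compare path words. -/
def ioLe (T : MergeTree) (a b : List Chir) : Prop :=
  (T.IsLeaf a ∧ T.IsInner b) ∨
    (((T.IsLeaf a ∧ T.IsLeaf b) ∨ (T.IsInner a ∧ T.IsInner b)) ∧ scLe a b)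

/-- The simplex order on the nodes of a merge tree. -/
def simpLe (a b : List Chir) : Prop :=
  a = b ∨ (b ++ [Chir.L]) <+: a ∨ (a ++ [Chir.R]) <+: b ∨
    ∃ p : List Chir, (p ++ [Chir.L]) <+: a ∧ (p ++ [Chir.R]) <+: b

lemma leAux_refl (c : Chir) (a : List Chir) : leAux c a a := by
  induction a generalizing c with
  | nil => trivial
  | cons x a ih => simpa [leAux] using ih x

lemma leAux_antisymm (a : List Chir) : ∀ c b, leAux c a b → leAux c b a → a = b := by
  induction a with
  | nil =>
    intro c b h1 _
    cases b with
    | nil => rfl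
    | cons y b => exact absurd h1 (by simp [leAux])
  | cons x a ih =>
    intro c b h1 h2
    cases b with
    | nil => exact absurd h2 (by simp [leAux])
    | cons y b =>
      simp only [leAux] at h1 h2
      by_cases hxy : x = y
      · subst hxy
        rw [if_pos rfl] at h1 h2
        rw [ih x b h1 h2]
      · rw [if_neg hxy] at h1
        rw [if_neg (Ne.symm hxy)] at h2
        exact absurd (h1.trans h2.symm) hxy

lemma leAux_trans (a : List Chir) : ∀ (c : Chir) (b d : List Chir),
    leAux c a b → leAux c b d → leAux c a d := by
  induction a with
  | nil =>
    intro c b d h1 h2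
    cases d with
    | nil => trivial
    | cons z d =>
      cases b with
      | nil => exact absurd h2 (by simp [leAux])
      | cons y b => exact absurd h1 (by simp [leAux])
  | cons x a ih =>
    intro c b d h1 h2
    cases d with
    | nil => trivial
    | cons z d =>
      cases b with
      | nil => exact absurd h2 (by simp [leAux])
      | cons y b =>
        simp only [leAux] at h1 h2 ⊢
        by_cases hxy : x = y
        · subst hxy
          rw [if_pos rfl] at h1
          by_cases hyz : x = z
          · subst hyz
            rw [if_pos rfl] at h2 ⊢
            exact ih x b d h1 h2
          · rw [if_neg hyz] at h2 ⊢
            exact h2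
        · rw [if_neg hxy] at h1
          by_cases hxz : x = z
          · subst hxz
            rw [if_neg (fun h => hxy h.symm)] at h2
            exact absurd (h1.trans h2.symm) hxy
          · rw [if_neg hxz]
            exact h1

lemma leAux_total (c : Chir) (a : List Chir) : ∀ b, leAux c a b ∨ leAux c b a := by
  induction a generalizing c with
  | nil => intro b; cases b <;> simp [leAux]
  | cons x a ih =>
    intro b
    cases b with
    | nil => left; trivial
    | cons y b =>
      by_cases hxy : x = y
      · subst hxy
        rcases ih x b with h | h
        · left; simp [leAux, h]
        · right; simp [leAux, h]
      · rcases (by cases x <;> cases y <;> cases c <;> simp_all : x = c ∨ y = c) with h | h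
        · subst h; left; simp [leAux, hxy]
        · subst h; right; simp [leAux, Ne.symm hxy]

lemma not_leaf_inner (T : MergeTree) (a : List Chir) (hl : T.IsLeaf a) (hi : T.IsInner a) :
    False := hl.2 hi.2

lemma leaf_or_inner (T : MergeTree) (a : List Chir) (ha : a ∈ T.nodes) :
    T.IsLeaf a ∨ T.IsInner a := by
  by_cases h : a ++ [Chir.L] ∈ T.nodes
  · exact Or.inr ⟨ha, h⟩
  · exact Or.inl ⟨ha, h⟩

/-- The index Morse order on the nodes of a merge tree is a total order:
reflexive, antisymmetric, transitive and total. -/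
theorem stmt4 (T : MergeTree) :
    (∀ a ∈ T.nodes, ioLe T a a) ∧
    (∀ a ∈ T.nodes, ∀ b ∈ T.nodes, ioLe T a b → ioLe T b a → a = b) ∧
    (∀ a ∈ T.nodes, ∀ b ∈ T.nodes, ∀ c ∈ T.nodes, ioLe T a b → ioLe T b c → ioLe T a c) ∧
    (∀ a ∈ T.nodes, ∀ b ∈ T.nodes, ioLe T a b ∨ ioLe T b a) := by
  refine ⟨?_, ?_, ?_, ?_⟩
  · intro a ha
    rcases leaf_or_inner T a ha with h | h
    · exact Or.inr ⟨Or.inl ⟨h, h⟩, leAux_refl _ _⟩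
    · exact Or.inr ⟨Or.inr ⟨h, h⟩, leAux_refl _ _⟩
  · intro a _ b _ h1 h2
    rcases h1 with ⟨la, ib⟩ | ⟨_, hab⟩
    · rcases h2 with ⟨lb, _⟩ | ⟨(⟨lb, _⟩ | ⟨_, ia⟩), _⟩
      · exact absurd ib (fun h => lb.2 h.2)
      · exact absurd ib (fun h => lb.2 h.2)
      · exact absurd ia (fun h => la.2 h.2)
    · rcases h2 with ⟨lb, ia⟩ | ⟨_, hba⟩
      · rcases ‹_ ∨ _› with ⟨la, _⟩ | ⟨_, ib⟩
        · exact absurd ia (fun h => la.2 h.2)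
        · exact absurd ib (fun h => lb.2 h.2)
      · exact leAux_antisymm a Chir.L b hab hba
  · intro a _ b _ c _ h1 h2
    rcases h1 with ⟨la, ib⟩ | ⟨(⟨la, lb⟩ | ⟨ia, ib⟩), hab⟩
    · rcases h2 with ⟨lb, _⟩ | ⟨(⟨lb, _⟩ | ⟨_, ic⟩), _⟩
      · exact absurd ib (fun h => lb.2 h.2)
      · exact absurd ib (fun h => lb.2 h.2)
      · exact Or.inl ⟨la, ic⟩
    · rcases h2 with ⟨_, ic⟩ | ⟨(⟨_, lc⟩ | ⟨ib, _⟩), hbc⟩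
      · exact Or.inl ⟨la, ic⟩
      · exact Or.inr ⟨Or.inl ⟨la, lc⟩, leAux_trans a Chir.L b c hab hbc⟩
      · exact absurd ib (fun h => lb.2 h.2)
    · rcases h2 with ⟨lb, _⟩ | ⟨(⟨lb, _⟩ | ⟨_, ic⟩), hbc⟩
      · exact absurd ib (fun h => lb.2 h.2)
      · exact absurd ib (fun h => lb.2 h.2)
      · exact Or.inr ⟨Or.inr ⟨ia, ic⟩, leAux_trans a Chir.L b c hab hbc⟩
  · intro a ha b hb
    rcases leaf_or_inner T a ha with la | ia <;> rcases leaf_or_inner T b hb with lb | ib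
    · rcases leAux_total Chir.L a b with h | h
      · exact Or.inl (Or.inr ⟨Or.inl ⟨la, lb⟩, h⟩)
      · exact Or.inr (Or.inr ⟨Or.inl ⟨lb, la⟩, h⟩)
    · exact Or.inl (Or.inl ⟨la, ib⟩)
    · exact Or.inr (Or.inl ⟨lb, ia⟩)
    · rcases leAux_total Chir.L a b with h | h
      · exact Or.inl (Or.inr ⟨Or.inr ⟨ia, ib⟩, h⟩)
      · exact Or.inr (Or.inr ⟨Or.inr ⟨ib, ia⟩, h⟩)
end

section
/- In a merge tree T equipped with its simplex order, each subtree forms a chain of cover relations: if p is an inner node with leftmost leaf a and rightmost leaf b in its subtree, then the nodes of the subtree rooted at p form a chain of cover relations a ≺ ... ≺ p ≺ ... ≺ b in (V(T), ⪯). Moreover, for any two adjacent leaves, the left one is covered by their youngest common ancestor and the right one covers it. -/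
/-- `y` covers `x` among the nodes of `T` with respect to the simplex order. -/
def simpCovers (T : MergeTree) (x y : List Chir) : Prop :=
  x ≠ y ∧ simpLe x y ∧ ∀ z ∈ T.nodes, simpLe x z → simpLe z y → z = x ∨ z = y

section Stmt7Aux

lemma getp {r z : List Chir} {c : Chir} (h : r ++ [c] <+: z) :
    z[r.length]? = some c := by
  obtain ⟨t, rfl⟩ := h
  rw [List.append_assoc, List.getElem?_append_right (le_refl _)]
  simp

lemma getpre {u v : List Chir} (h : u <+: v) {i : ℕ} (hi : i < u.length) :
    v[i]? = u[i]? := by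
  obtain ⟨t, rfl⟩ := h
  rw [List.getElem?_append_left hi]

lemma lenlt {r z : List Chir} {c : Chir} (h : r ++ [c] <+: z) :
    r.length < z.length := by
  have := h.length_le; simp at this; omega

lemma prefl {r z : List Chir} {c : Chir} (h : r ++ [c] <+: z) : r <+: z :=
  (List.prefix_append r [c]).trans h

lemma rep_prefix {j k : ℕ} (c : Chir) (h : j ≤ k) :
    List.replicate j c <+: List.replicate k c :=
  ⟨List.replicate (k - j) c, by rw [← List.replicate_add]; congr 1; omega⟩

lemma mem_of_prefix (T : MergeTree) : ∀ {u n : List Chir}, u <+: n → n ∈ T.nodes → u ∈ T.nodes := by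
  suffices h : ∀ (t u : List Chir), u ++ t ∈ T.nodes → u ∈ T.nodes by
    intro u n hun hn; obtain ⟨t, rfl⟩ := hun; exact h t u hn
  intro t
  induction t using List.reverseRecOn with
  | nil => intro u h; simpa using h
  | append_singleton t x ih =>
      intro u h
      exact ih u (T.prefix_closed (u ++ t) x (by simpa [List.append_assoc] using h))

lemma exists_leaf_rep (T : MergeTree) (c : Chir) {n : List Chir} (hn : n ∈ T.nodes) :
    ∃ k, T.IsLeaf (n ++ List.replicate k c) := by
  suffices key : ∀ (m : ℕ) (n : List Chir), n ∈ T.nodes →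
      T.nodes.sup List.length + 1 - n.length ≤ m →
      ∃ k, T.IsLeaf (n ++ List.replicate k c) by
    exact key _ n hn le_rfl
  intro m
  induction m with
  | zero =>
      intro n hn hle
      exfalso
      have := Finset.le_sup (f := List.length) hn
      omega
  | succ m ih =>
      intro n hn hle
      by_cases h : n ++ [c] ∈ T.nodes
      · have hl := Finset.le_sup (f := List.length) h
        simp only [List.length_append, List.length_cons, List.length_nil] at hl
        obtain ⟨k, hk⟩ := ih (n ++ [c]) h
          (by simp only [List.length_append, List.length_cons, List.length_nil]; omega)
        refine ⟨k + 1, ?_⟩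
        have he : n ++ [c] ++ List.replicate k c = n ++ List.replicate (k + 1) c := by
          simp [List.replicate_succ]
        rwa [he] at hk
      · have hnL : n ++ [Chir.L] ∉ T.nodes := by
          cases c
          · exact h
          · exact fun hL => h ((T.full n).mp hL)
        refine ⟨0, ?_⟩
        rw [show n ++ List.replicate 0 c = n by simp]
        exact ⟨hn, hnL⟩

lemma minL (T : MergeTree) : ∀ (k : ℕ) (p t : List Chir),
    T.IsLeaf (p ++ List.replicate k Chir.L) → p ++ t ∈ T.nodes →
    simpLe (p ++ List.replicate k Chir.L) (p ++ t) := by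
  intro k
  induction k with
  | zero =>
      intro p t hl hm
      cases t with
      | nil => exact Or.inl rfl
      | cons c t' =>
          exfalso
          have hc : p ++ [c] ∈ T.nodes := mem_of_prefix T ⟨t', by simp⟩ hm
          have hL : p ++ [Chir.L] ∈ T.nodes := by
            cases c
            · exact hc
            · exact (T.full p).mpr hc
          have hl' : T.IsLeaf p := by simpa using hl
          exact hl'.2 hL
  | succ k ih =>
      intro p t hl hm
      cases t with
      | nil =>
          refine Or.inr (Or.inl ⟨List.replicate k Chir.L, ?_⟩)
          simp [List.replicate_succ]
      | cons c t' =>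
          cases c with
          | L =>
              have h1 : T.IsLeaf ((p ++ [Chir.L]) ++ List.replicate k Chir.L) := by
                simpa [List.replicate_succ, List.append_assoc] using hl
              have h2 : (p ++ [Chir.L]) ++ t' ∈ T.nodes := by
                simpa [List.append_assoc] using hm
              have := ih (p ++ [Chir.L]) t' h1 h2
              simpa [List.replicate_succ, List.append_assoc] using this
          | R =>
              refine Or.inr (Or.inr (Or.inr ⟨p, ⟨List.replicate k Chir.L, ?_⟩, ⟨t', by simp⟩⟩))
              simp [List.replicate_succ]

lemma maxR (T : MergeTree) : ∀ (k : ℕ) (p t : List Chir),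
    T.IsLeaf (p ++ List.replicate k Chir.R) → p ++ t ∈ T.nodes →
    simpLe (p ++ t) (p ++ List.replicate k Chir.R) := by
  intro k
  induction k with
  | zero =>
      intro p t hl hm
      cases t with
      | nil => exact Or.inl rfl
      | cons c t' =>
          exfalso
          have hc : p ++ [c] ∈ T.nodes := mem_of_prefix T ⟨t', by simp⟩ hm
          have hL : p ++ [Chir.L] ∈ T.nodes := by
            cases c
            · exact hc
            · exact (T.full p).mpr hc
          have hl' : T.IsLeaf p := by simpa using hl
          exact hl'.2 hL
  | succ k ih =>
      intro p t hl hm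
      cases t with
      | nil =>
          refine Or.inr (Or.inr (Or.inl ⟨List.replicate k Chir.R, ?_⟩))
          simp [List.replicate_succ]
      | cons c t' =>
          cases c with
          | R =>
              have h1 : T.IsLeaf ((p ++ [Chir.R]) ++ List.replicate k Chir.R) := by
                simpa [List.replicate_succ, List.append_assoc] using hl
              have h2 : (p ++ [Chir.R]) ++ t' ∈ T.nodes := by
                simpa [List.append_assoc] using hm
              have := ih (p ++ [Chir.R]) t' h1 h2
              simpa [List.replicate_succ, List.append_assoc] using this
          | L =>
              refine Or.inr (Or.inr (Or.inr ⟨p, ⟨t', by simp⟩, ⟨List.replicate k Chir.R, ?_⟩⟩))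
              simp [List.replicate_succ]

lemma simpLe_append_R {a z : List Chir} (k : ℕ) (h : simpLe a z) :
    simpLe a (z ++ List.replicate k Chir.R) := by
  cases k with
  | zero => simpa using h
  | succ k =>
      rcases h with rfl | h | h | ⟨r, h1, h2⟩
      · exact Or.inr (Or.inr (Or.inl ⟨List.replicate k Chir.R, by simp [List.replicate_succ]⟩))
      · exact Or.inr (Or.inr (Or.inr ⟨z, h, ⟨List.replicate k Chir.R, by simp [List.replicate_succ]⟩⟩))
      · exact Or.inr (Or.inr (Or.inl (h.trans (List.prefix_append _ _))))
      · exact Or.inr (Or.inr (Or.inr ⟨r, h1, h2.trans (List.prefix_append _ _)⟩))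

lemma simpLe_append_L {z b : List Chir} (k : ℕ) (h : simpLe z b) :
    simpLe (z ++ List.replicate k Chir.L) b := by
  cases k with
  | zero => simpa using h
  | succ k =>
      rcases h with rfl | h | h | ⟨r, h1, h2⟩
      · exact Or.inr (Or.inl ⟨List.replicate k Chir.L, by simp [List.replicate_succ]⟩)
      · exact Or.inr (Or.inl (h.trans (List.prefix_append _ _)))
      · exact Or.inr (Or.inr (Or.inr ⟨z, ⟨List.replicate k Chir.L, by simp [List.replicate_succ]⟩, h⟩))
      · exact Or.inr (Or.inr (Or.inr ⟨r, h1.trans (List.prefix_append _ _), h2⟩))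

lemma decompChir : ∀ t : List Chir, (∃ j, t = List.replicate j Chir.R) ∨
    ∃ s j, t = s ++ Chir.L :: List.replicate j Chir.R := by
  intro t
  induction t using List.reverseRecOn with
  | nil => exact Or.inl ⟨0, rfl⟩
  | append_singleton t x ih =>
      cases x with
      | L => exact Or.inr ⟨t, 0, by simp⟩
      | R =>
          rcases ih with ⟨j, rfl⟩ | ⟨s, j, rfl⟩
          · exact Or.inl ⟨j + 1, by simp [List.replicate_succ']⟩
          · exact Or.inr ⟨s, j + 1, by simp [List.replicate_succ']⟩

lemma simpLe_antisymm {a b : List Chir} (h1 : simpLe a b) (h2 : simpLe b a) : a = b := by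
  rcases h1 with rfl | h1 | h1 | ⟨p, hp1, hp2⟩
  · rfl
  · rcases h2 with rfl | h2 | h2 | ⟨q, hq1, hq2⟩
    · rfl
    · exfalso; have := lenlt h1; have := lenlt h2; omega
    · exfalso
      have e1 := getp h1
      have e2 := getp h2
      rw [e1] at e2; exact Chir.noConfusion (Option.some.inj e2)
    · exfalso
      have e1 := getp hq1
      have e2 := getp hq2
      have e3 := getpre (prefl h1) (lenlt hq1)
      rw [e3, e1] at e2; exact Chir.noConfusion (Option.some.inj e2)
  · rcases h2 with rfl | h2 | h2 | ⟨q, hq1, hq2⟩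
    · rfl
    · exfalso
      have e1 := getp h2
      have e2 := getp h1
      rw [e1] at e2; exact Chir.noConfusion (Option.some.inj e2)
    · exfalso; have := lenlt h1; have := lenlt h2; omega
    · exfalso
      have e1 := getp hq1
      have e2 := getp hq2
      have e3 := getpre (prefl h1) (lenlt hq2)
      rw [e3, e2] at e1; exact Chir.noConfusion (Option.some.inj e1)
  · exfalso
    have e1 := getp hp1
    have e2 := getp hp2
    rcases h2 with rfl | h2 | h2 | ⟨q, hq1, hq2⟩
    · rw [e1] at e2; exact Chir.noConfusion (Option.some.inj e2)
    · have e3 := getpre (prefl h2) (lenlt hp1)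
      rw [e1] at e3; rw [e3] at e2; exact Chir.noConfusion (Option.some.inj e2)
    · have e3 := getpre (prefl h2) (lenlt hp2)
      rw [e2] at e3; rw [e3] at e1; exact Chir.noConfusion (Option.some.inj e1)
    · have e3 := getp hq1
      have e4 := getp hq2
      rcases lt_trichotomy p.length q.length with hl | hl | hl
      · have g1 := getpre (prefl hq2) hl
        have g2 := getpre (prefl hq1) hl
        rw [e1] at g1
        rw [e2, ← g1] at g2
        exact Chir.noConfusion (Option.some.inj g2)
      · rw [hl] at e1
        rw [e1] at e4; exact Chir.noConfusion (Option.some.inj e4)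
      · have g1 := getpre (prefl hp1) hl
        have g2 := getpre (prefl hp2) hl
        rw [e4] at g1
        rw [e3, ← g1] at g2
        exact Chir.noConfusion (Option.some.inj g2)

lemma lemA {q w z : List Chir} (hzq : simpLe z q) (hne : z ≠ q)
    (haz : simpLe (q ++ Chir.L :: w) z) : q ++ [Chir.L] <+: z := by
  have hqa : q <+: q ++ Chir.L :: w := List.prefix_append _ _
  rcases hzq with rfl | h | h | ⟨r, hr1, hr2⟩
  · exact absurd rfl hne
  · exact h
  · exfalso
    have hlen := lenlt h
    rcases haz with heq | h2 | h2 | ⟨s, hs1, hs2⟩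
    · have := congrArg List.length heq
      simp only [List.length_append, List.length_cons] at this; omega
    · have e1 := getp h2
      have e2 := getp h
      have e3 := getpre hqa hlen
      rw [e3, e2] at e1; exact Chir.noConfusion (Option.some.inj e1)
    · have h3 := lenlt h2
      simp only [List.length_append, List.length_cons] at h3; omega
    · have e1 := getp hs2
      have e2 := getp hs1
      have e3 := getpre ((prefl h).trans hqa) (lenlt hs2)
      rw [e3, e1] at e2; exact Chir.noConfusion (Option.some.inj e2)
  · exfalso
    have e1 := getp hr1
    have e2 := getp hr2
    have e2' : (q ++ Chir.L :: w)[r.length]? = some Chir.R := by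
      rw [getpre hqa (lenlt hr2)]; exact e2
    rcases haz with heq | h2 | h2 | ⟨s, hs1, hs2⟩
    · rw [heq] at e2'; rw [e1] at e2'; exact Chir.noConfusion (Option.some.inj e2')
    · have e3 := getpre (prefl h2) (lenlt hr1)
      rw [e1] at e3; rw [e3] at e2'; exact Chir.noConfusion (Option.some.inj e2')
    · have hra : r.length < (q ++ Chir.L :: w).length := by
        simp only [List.length_append, List.length_cons]
        have := lenlt hr2; omega
      have e3 := getpre (prefl h2) hra
      rw [e1, e2'] at e3; exact Chir.noConfusion (Option.some.inj e3)
    · have f1 := getp hs1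
      have f2 := getp hs2
      rcases lt_trichotomy s.length r.length with hl | hl | hl
      · have g1 := getpre (prefl hr1) hl
        have g2 := getpre (prefl hr2) hl
        have g3 := getpre hqa (lt_trans hl (lenlt hr2))
        have key : (q ++ Chir.L :: w)[s.length]? = some Chir.R := by
          rw [g3, g2, ← g1, f2]
        rw [f1] at key; exact Chir.noConfusion (Option.some.inj key)
      · rw [hl] at f2; rw [e1] at f2; exact Chir.noConfusion (Option.some.inj f2)
      · have g1 := getpre (prefl hs2) hl
        have g2 := getpre (prefl hs1) hl
        have key : (q ++ Chir.L :: w)[r.length]? = some Chir.L := by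
          rw [g2, ← g1, e1]
        rw [e2'] at key; exact Chir.noConfusion (Option.some.inj key)

lemma lemB {q w z : List Chir} (hqz : simpLe q z) (hne : z ≠ q)
    (hzb : simpLe z (q ++ Chir.R :: w)) : q ++ [Chir.R] <+: z := by
  have hqb : q <+: q ++ Chir.R :: w := List.prefix_append _ _
  rcases hqz with rfl | h | h | ⟨r, hr1, hr2⟩
  · exact absurd rfl hne
  · exfalso
    have hlen := lenlt h
    rcases hzb with heq | h2 | h2 | ⟨s, hs1, hs2⟩
    · have := congrArg List.length heq
      simp only [List.length_append, List.length_cons] at this; omega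
    · have h3 := lenlt h2
      simp only [List.length_append, List.length_cons] at h3; omega
    · have e1 := getp h2
      have e2 := getp h
      have e3 := getpre hqb hlen
      rw [e3, e2] at e1; exact Chir.noConfusion (Option.some.inj e1)
    · have f1 := getp hs1
      have f2 := getp hs2
      have e3 := getpre ((prefl h).trans hqb) (lenlt hs1)
      rw [e3, f1] at f2; exact Chir.noConfusion (Option.some.inj f2)
  · exact h
  · exfalso
    have e1 := getp hr1
    have e2 := getp hr2
    have e1' : (q ++ Chir.R :: w)[r.length]? = some Chir.L := by
      rw [getpre hqb (lenlt hr1)]; exact e1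
    rcases hzb with heq | h2 | h2 | ⟨s, hs1, hs2⟩
    · rw [← heq] at e1'; rw [e2] at e1'; exact Chir.noConfusion (Option.some.inj e1')
    · have hrb : r.length < (q ++ Chir.R :: w).length := by
        simp only [List.length_append, List.length_cons]
        have := lenlt hr1; omega
      have g := getpre (prefl h2) hrb
      rw [e2, e1'] at g; exact Chir.noConfusion (Option.some.inj g)
    · have g := getpre (prefl h2) (lenlt hr2)
      rw [e2, e1'] at g; exact Chir.noConfusion (Option.some.inj g)
    · have f1 := getp hs1
      have f2 := getp hs2
      rcases lt_trichotomy s.length r.length with hl | hl | hl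
      · have g1 := getpre (prefl hr2) hl
        have g2 := getpre (prefl hr1) hl
        have g3 := getpre hqb (lt_trans hl (lenlt hr1))
        have key : (q ++ Chir.R :: w)[s.length]? = some Chir.L := by
          rw [g3, g2, ← g1, f1]
        rw [f2] at key; exact Chir.noConfusion (Option.some.inj key)
      · rw [hl] at f1; rw [e2] at f1; exact Chir.noConfusion (Option.some.inj f1)
      · have g1 := getpre (prefl hs1) hl
        have g2 := getpre (prefl hs2) hl
        have key : (q ++ Chir.R :: w)[r.length]? = some Chir.R := by
          rw [g2, ← g1, e2]
        rw [e1'] at key; exact Chir.noConfusion (Option.some.inj key)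

end Stmt7Aux

/-- Subtrees form chains of cover relations in the simplex order: for an inner node `p`
whose subtree has leftmost leaf `a = p ++ L…L` and rightmost leaf `b = p ++ R…R`, every
node of the subtree lies between `a` and `b`, and every node of the subtree other than
`b` is covered by another node of the subtree.  Moreover, for two adjacent leaves, the
left one is covered by their youngest common ancestor, which is covered by the right
one. -/
theorem stmt7 (T : MergeTree) :
    (∀ p : List Chir, T.IsInner p → ∀ ka kb : ℕ,
        T.IsLeaf (p ++ List.replicate ka Chir.L) →
        T.IsLeaf (p ++ List.replicate kb Chir.R) →
        (∀ n ∈ T.nodes, p <+: n →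
            simpLe (p ++ List.replicate ka Chir.L) n ∧
            simpLe n (p ++ List.replicate kb Chir.R)) ∧
        (∀ x ∈ T.nodes, p <+: x → x ≠ p ++ List.replicate kb Chir.R →
            ∃ y ∈ T.nodes, p <+: y ∧ simpCovers T x y)) ∧
    (∀ a ∈ T.nodes, ∀ b ∈ T.nodes, T.IsLeaf a → T.IsLeaf b → simpLe a b → a ≠ b →
        (∀ c ∈ T.nodes, T.IsLeaf c → simpLe a c → simpLe c b → c = a ∨ c = b) →
        ∀ p : List Chir,
          (p <+: a ∧ p <+: b ∧ ∀ q : List Chir, q <+: a → q <+: b → q <+: p) →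
          simpCovers T a p ∧ simpCovers T p b) := by
  constructor
  · intro p hIp ka kb hla hlb
    constructor
    · intro n hn hpn
      obtain ⟨t, rfl⟩ := hpn
      exact ⟨minL T ka p t hla hn, maxR T kb p t hlb hn⟩
    · intro x hx hpx hxb
      by_cases hinner : x ++ [Chir.L] ∈ T.nodes
      · -- x is an inner node: its cover is the leftmost leaf of its right subtree
        have hxR : x ++ [Chir.R] ∈ T.nodes := (T.full x).mp hinner
        obtain ⟨m, hym⟩ := exists_leaf_rep T Chir.L hxR
        refine ⟨x ++ [Chir.R] ++ List.replicate m Chir.L, hym.1,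
          hpx.trans ((List.prefix_append _ _).trans (List.prefix_append _ _)), ?_, ?_, ?_⟩
        · intro hcontr
          have := congrArg List.length hcontr
          simp only [List.length_append, List.length_cons, List.length_nil,
            List.length_replicate] at this
          omega
        · exact Or.inr (Or.inr (Or.inl (List.prefix_append _ _)))
        · intro z hz hxz hzy
          rcases eq_or_ne z x with rfl | hzx
          · exact Or.inl rfl
          right
          have hy_eq : x ++ [Chir.R] ++ List.replicate m Chir.L
              = x ++ Chir.R :: List.replicate m Chir.L := by simp
          have hzy' : simpLe z (x ++ Chir.R :: List.replicate m Chir.L) := by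
            rwa [hy_eq] at hzy
          obtain ⟨t, ht⟩ := lemB hxz hzx hzy'
          have hzmem : (x ++ [Chir.R]) ++ t ∈ T.nodes := by rwa [ht]
          have hyz := minL T m (x ++ [Chir.R]) t hym hzmem
          rw [ht] at hyz
          exact simpLe_antisymm hzy hyz
      · -- x is a leaf
        have hxleaf : T.IsLeaf x := ⟨hx, hinner⟩
        obtain ⟨tx, rfl⟩ := hpx
        rcases decompChir tx with ⟨j, rfl⟩ | ⟨s, j, rfl⟩
        · -- x lies on the rightmost spine: then x = b, contradiction
          exfalso
          rcases lt_trichotomy j kb with h | rfl | h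
          · have h1 : List.replicate (j + 1) Chir.R <+: List.replicate kb Chir.R :=
              rep_prefix _ (by omega)
            obtain ⟨u, hu⟩ := h1
            have hpre : (p ++ List.replicate j Chir.R) ++ [Chir.R] <+:
                p ++ List.replicate kb Chir.R := by
              refine ⟨u, ?_⟩
              rw [List.append_assoc p, ← List.replicate_succ', List.append_assoc p, hu]
            have hmem := mem_of_prefix T hpre hlb.1
            exact hinner ((T.full _).mpr hmem)
          · exact hxb rfl
          · have h1 : List.replicate (kb + 1) Chir.R <+: List.replicate j Chir.R :=
              rep_prefix _ (by omega)
            obtain ⟨u, hu⟩ := h1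
            have hpre : (p ++ List.replicate kb Chir.R) ++ [Chir.R] <+:
                p ++ List.replicate j Chir.R := by
              refine ⟨u, ?_⟩
              rw [List.append_assoc p, ← List.replicate_succ', List.append_assoc p, hu]
            have hmem := mem_of_prefix T hpre hx
            exact hlb.2 ((T.full _).mpr hmem)
        · -- x = (p ++ s) ++ L :: R^j : its cover is q = p ++ s
          have hxe : p ++ (s ++ Chir.L :: List.replicate j Chir.R)
              = (p ++ s) ++ Chir.L :: List.replicate j Chir.R := by
            simp [List.append_assoc]
          have hxe2 : (p ++ s) ++ Chir.L :: List.replicate j Chir.R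
              = ((p ++ s) ++ [Chir.L]) ++ List.replicate j Chir.R := by
            simp [List.append_assoc]
          refine ⟨p ++ s, mem_of_prefix T ⟨Chir.L :: List.replicate j Chir.R, hxe.symm⟩ hx,
            ⟨s, rfl⟩, ?_, ?_, ?_⟩
          · intro hcontr
            have := congrArg List.length hcontr
            simp only [List.length_append, List.length_cons, List.length_replicate] at this
            omega
          · refine Or.inr (Or.inl ⟨List.replicate j Chir.R, ?_⟩)
            rw [hxe, hxe2]
          · intro z hz hxz hzq
            rcases eq_or_ne z (p ++ (s ++ Chir.L :: List.replicate j Chir.R)) with rfl | hzx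
            · exact Or.inl rfl
            rcases eq_or_ne z (p ++ s) with rfl | hzq'
            · exact Or.inr rfl
            left
            have hxz' : simpLe ((p ++ s) ++ Chir.L :: List.replicate j Chir.R) z := by
              rwa [hxe] at hxz
            obtain ⟨t, ht⟩ := lemA hzq hzq' hxz'
            have hzt : ((p ++ s) ++ [Chir.L]) ++ t ∈ T.nodes := by rwa [ht]
            have hleafx : T.IsLeaf (((p ++ s) ++ [Chir.L]) ++ List.replicate j Chir.R) := by
              rw [← hxe2, ← hxe]; exact hxleaf
            have hzx2 := maxR T j ((p ++ s) ++ [Chir.L]) t hleafx hzt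
            rw [ht, ← hxe2, ← hxe] at hzx2
            exact (simpLe_antisymm hxz hzx2).symm
  · intro a ha b hb hla hlb hab hne hadj p hp
    obtain ⟨hpa, hpb, hmax⟩ := hp
    obtain ⟨ta, rfl⟩ := hpa
    obtain ⟨tb, rfl⟩ := hpb
    cases ta with
    | nil =>
        exfalso
        cases tb with
        | nil => exact hne rfl
        | cons cb tb' =>
            have hc : p ++ [cb] ∈ T.nodes := mem_of_prefix T ⟨tb', by simp⟩ hb
            have hL : p ++ [Chir.L] ∈ T.nodes := by
              cases cb
              · exact hc
              · exact (T.full p).mpr hc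
            apply hla.2
            simpa using hL
    | cons ca ta' =>
        cases tb with
        | nil =>
            exfalso
            have hc : p ++ [ca] ∈ T.nodes := mem_of_prefix T ⟨ta', by simp⟩ ha
            have hL : p ++ [Chir.L] ∈ T.nodes := by
              cases ca
              · exact hc
              · exact (T.full p).mpr hc
            apply hlb.2
            simpa using hL
        | cons cb tb' =>
            by_cases hcc : ca = cb
            · exfalso
              subst hcc
              have h := hmax (p ++ [ca]) ⟨ta', by simp⟩ ⟨tb', by simp⟩
              have := h.length_le
              simp only [List.length_append, List.length_cons, List.length_nil] at this
              omega
            cases ca with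
            | R =>
                exfalso
                cases cb with
                | R => exact hcc rfl
                | L =>
                    have hba : simpLe (p ++ Chir.L :: tb') (p ++ Chir.R :: ta') :=
                      Or.inr (Or.inr (Or.inr ⟨p, ⟨tb', by simp⟩, ⟨ta', by simp⟩⟩))
                    exact hne (simpLe_antisymm hab hba)
            | L =>
                cases cb with
                | L => exact absurd rfl hcc
                | R =>
                    constructor
                    · -- simpCovers a p
                      refine ⟨?_, Or.inr (Or.inl ⟨ta', by simp⟩), ?_⟩
                      · intro hcontr
                        have := congrArg List.length hcontr
                        simp only [List.length_append, List.length_cons] at this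
                        omega
                      intro z hz haz hzp
                      rcases eq_or_ne z (p ++ Chir.L :: ta') with rfl | hza
                      · exact Or.inl rfl
                      rcases eq_or_ne z p with rfl | hzp'
                      · exact Or.inr rfl
                      exfalso
                      have hpre := lemA hzp hzp' haz
                      obtain ⟨k, hk⟩ := exists_leaf_rep T Chir.R hz
                      have hlb2 : simpLe (z ++ List.replicate k Chir.R) (p ++ Chir.R :: tb') :=
                        Or.inr (Or.inr (Or.inr ⟨p, hpre.trans (List.prefix_append _ _),
                          ⟨tb', by simp⟩⟩))
                      have hla2 : simpLe (p ++ Chir.L :: ta') (z ++ List.replicate k Chir.R) :=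
                        simpLe_append_R k haz
                      rcases hadj _ hk.1 hk hla2 hlb2 with hEa | hEb
                      · cases k with
                        | zero => apply hza; simpa using hEa
                        | succ k =>
                            have hz_a : simpLe z (p ++ Chir.L :: ta') := by
                              have : simpLe z (z ++ List.replicate (k + 1) Chir.R) :=
                                Or.inr (Or.inr (Or.inl ⟨List.replicate k Chir.R,
                                  by simp [List.replicate_succ]⟩))
                              rwa [hEa] at this
                            exact hza (simpLe_antisymm hz_a haz)
                      · have e1 : (z ++ List.replicate k Chir.R)[p.length]? = some Chir.L :=
                          getp (hpre.trans (List.prefix_append _ _))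
                        have e2 : (p ++ Chir.R :: tb')[p.length]? = some Chir.R :=
                          getp ⟨tb', by simp⟩
                        rw [hEb, e2] at e1
                        exact Chir.noConfusion (Option.some.inj e1)
                    · -- simpCovers p b
                      refine ⟨?_, Or.inr (Or.inr (Or.inl ⟨tb', by simp⟩)), ?_⟩
                      · intro hcontr
                        have := congrArg List.length hcontr
                        simp only [List.length_append, List.length_cons] at this
                        omega
                      intro z hz hpz hzb
                      rcases eq_or_ne z p with rfl | hzp'
                      · exact Or.inl rfl
                      rcases eq_or_ne z (p ++ Chir.R :: tb') with rfl | hzb'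
                      · exact Or.inr rfl
                      exfalso
                      have hpre := lemB hpz hzp' hzb
                      obtain ⟨k, hk⟩ := exists_leaf_rep T Chir.L hz
                      have hlb2 : simpLe (z ++ List.replicate k Chir.L) (p ++ Chir.R :: tb') :=
                        simpLe_append_L k hzb
                      have hla2 : simpLe (p ++ Chir.L :: ta') (z ++ List.replicate k Chir.L) :=
                        Or.inr (Or.inr (Or.inr ⟨p, ⟨ta', by simp⟩,
                          hpre.trans (List.prefix_append _ _)⟩))
                      rcases hadj _ hk.1 hk hla2 hlb2 with hEa | hEb
                      · have e1 : (z ++ List.replicate k Chir.L)[p.length]? = some Chir.R :=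
                          getp (hpre.trans (List.prefix_append _ _))
                        have e2 : (p ++ Chir.L :: ta')[p.length]? = some Chir.L :=
                          getp ⟨ta', by simp⟩
                        rw [hEa, e2] at e1
                        exact Chir.noConfusion (Option.some.inj e1)
                      · cases k with
                        | zero => apply hzb'; simpa using hEb
                        | succ k =>
                            have hb_z : simpLe (p ++ Chir.R :: tb') z := by
                              refine Or.inr (Or.inl ?_)
                              rw [← hEb]
                              exact ⟨List.replicate k Chir.L, by simp [List.replicate_succ]⟩
                            exact hzb' (simpLe_antisymm hzb hb_z)
end

section
/- Subtrees of a merge tree T form intervals with respect to the sublevel-connected Morse order: if T' is a subtree of T, then the set of nodes of T' is an interval in the totally ordered set (V(T), ≤_sc). -/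
theorem scLe_interval_aux : ∀ (p : List Chir) (last : Chir) (x y z : List Chir),
    p <+: x → p <+: y → leAux last x z → leAux last z y → p <+: z := by
  intro p
  induction p with
  | nil => intro _ _ _ z _ _ _ _; exact z.nil_prefix
  | cons c p ih =>
    intro last x y z hx hy hxz hzy
    obtain ⟨x', rfl⟩ := hx
    obtain ⟨y', rfl⟩ := hy
    match z with
    | [] => simp [leAux] at hzy
    | d :: z' =>
      by_cases h : c = d
      · subst h
        simp only [List.cons_append, leAux, if_pos rfl] at hxz hzy
        obtain ⟨w, hw⟩ := ih c _ _ _ (p.prefix_append x') (p.prefix_append y') hxz hzy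
        exact ⟨w, by simp [← hw]⟩
      · exfalso
        simp only [List.cons_append, leAux, if_neg h, if_neg (Ne.symm h)] at hxz hzy
        exact h (hxz.trans hzy.symm)

/-- Subtrees of a merge tree form intervals with respect to the sublevel-connected
Morse order. -/
theorem stmt8 (T : MergeTree) (p : List Chir) (hp : p ∈ T.nodes) :
    ∀ x ∈ T.nodes, ∀ y ∈ T.nodes, ∀ z ∈ T.nodes,
      p <+: x → p <+: y → scLe x z → scLe z y → p <+: z := by
  intro x _ y _ z _ hx hy hxz hzy
  exact scLe_interval_aux p Chir.L x y z hx hy hxz hzy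
end

section
/- For a merge tree T and a path P with i(T) 1-simplices, the induced index-ordered dMf f_io and the induced sublevel-connected dMf f_sc on P are shuffle-equivalent; consequently M(P, f_io) and M(P, f_sc) are isomorphic merge trees. -/
/-- A Morse order on a merge tree: a total order on the nodes that attains its maximum
at the root of each subtree and its minimum inside the child-subtree matching the
chirality of the root of the subtree. -/
def IsMorseOrder (T : MergeTree) (r : List Chir → List Chir → Prop) : Prop :=
  (∀ a ∈ T.nodes, r a a) ∧
  (∀ a ∈ T.nodes, ∀ b ∈ T.nodes, r a b → r b a → a = b) ∧
  (∀ a ∈ T.nodes, ∀ b ∈ T.nodes, ∀ c ∈ T.nodes, r a b → r b c → r a c) ∧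
  (∀ a ∈ T.nodes, ∀ b ∈ T.nodes, r a b ∨ r b a) ∧
  (∀ p ∈ T.nodes, ∀ n ∈ T.nodes, p <+: n → r n p) ∧
  (∀ p : List Chir, T.IsInner p → ∃ m ∈ T.nodes, (p ++ [chir p]) <+: m ∧
      ∀ n ∈ T.nodes, p <+: n → r m n)

/-- The Morse labeling induced by an order `r`: the unique order isomorphism from the
nodes of `T` onto `{0, 1, …, 2·i(T)}`. -/
def IsMorseLabeling (T : MergeTree) (r : List Chir → List Chir → Prop)
    (lab : List Chir → ℕ) : Prop :=
  (∀ n ∈ T.nodes, lab n < 2 * T.innerCount + 1) ∧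
  (∀ k : ℕ, k < 2 * T.innerCount + 1 → ∃ n ∈ T.nodes, lab n = k) ∧
  (∀ a ∈ T.nodes, ∀ b ∈ T.nodes, lab a = lab b → a = b) ∧
  (∀ a ∈ T.nodes, ∀ b ∈ T.nodes, (r a b ↔ lab a ≤ lab b))

/-- An order-preserving bijection from the simplices of a path with `i(T)` 1-simplices
(concretely: `Fin (2·i(T)+1)` with its linear order, which is the simplex order coming
from an orientation) to the nodes of `T` with the simplex order. -/
def IsSimplexIso (T : MergeTree) (φ : Fin (2 * T.innerCount + 1) → List Chir) : Prop :=
  (∀ i, φ i ∈ T.nodes) ∧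
  (∀ n ∈ T.nodes, ∃ i, φ i = n) ∧
  (∀ i j, i ≤ j ↔ simpLe (φ i) (φ j))

/-- A discrete Morse function, with only critical cells, on a path whose simplices are
listed left to right as `Fin N` (even indices are vertices, odd indices are edges):
injective and weakly increasing from a vertex to an incident edge. -/
def IsPathDMFallCrit {N : ℕ} {α : Type*} [LinearOrder α] (f : Fin N → α) : Prop :=
  Function.Injective f ∧
  ∀ j : ℕ, ∀ h : 2 * j + 2 < N,
    f ⟨2 * j, by omega⟩ ≤ f ⟨2 * j + 1, by omega⟩ ∧
    f ⟨2 * j + 2, by omega⟩ ≤ f ⟨2 * j + 1, by omega⟩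

/-- `(T, ν)` is the Morse labeled merge tree induced by a dMf `f` (with only critical
cells) on a path whose simplices are `Fin N` listed left to right: `ν` assigns to each
node of `T` its corresponding critical simplex; the root corresponds to the maximal
critical edge; the children of an inner node correspond to the maxima of `f` on the two
connected components of the strict sublevel complex adjacent to the corresponding edge,
the component containing the smaller minimum inheriting the parent's chirality.  The
canonical labeling of the induced Ml tree is `f ∘ ν`. -/
def InducedMlPath {N : ℕ} {α : Type*} [LinearOrder α] (f : Fin N → α)
    (T : MergeTree) (ν : List Chir → Fin N) : Prop :=
  (∀ n ∈ T.nodes, ∀ n' ∈ T.nodes, ν n = ν n' → n = n') ∧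
  (∀ n ∈ T.nodes, (T.IsLeaf n ↔ (ν n).1 % 2 = 0)) ∧
  ((∃ i : Fin N, i.1 % 2 = 1) →
    T.IsInner [] ∧ ∀ i : Fin N, i.1 % 2 = 1 → f i ≤ f (ν [])) ∧
  ((¬ ∃ i : Fin N, i.1 % 2 = 1) → T.nodes = {([] : List Chir)}) ∧
  (∀ n : List Chir, T.IsInner n → (ν n).1 % 2 = 1 ∧
    ∃ lo hi : Fin N, lo.1 < (ν n).1 ∧ (ν n).1 < hi.1 ∧
      (∀ i : Fin N, lo.1 ≤ i.1 → i.1 < (ν n).1 → f i < f (ν n)) ∧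
      (∀ i : Fin N, (ν n).1 < i.1 → i.1 ≤ hi.1 → f i < f (ν n)) ∧
      (∀ i : Fin N, i.1 + 1 = lo.1 → f (ν n) ≤ f i) ∧
      (∀ i : Fin N, hi.1 + 1 = i.1 → f (ν n) ≤ f i) ∧
      ∃ il ir : Fin N, lo.1 ≤ il.1 ∧ il.1 < (ν n).1 ∧ (ν n).1 < ir.1 ∧ ir.1 ≤ hi.1 ∧
        (∀ i : Fin N, lo.1 ≤ i.1 → i.1 < (ν n).1 → f i ≤ f il) ∧
        (∀ i : Fin N, (ν n).1 < i.1 → i.1 ≤ hi.1 → f i ≤ f ir) ∧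
        ∃ ml mr : Fin N, lo.1 ≤ ml.1 ∧ ml.1 < (ν n).1 ∧ (ν n).1 < mr.1 ∧ mr.1 ≤ hi.1 ∧
          (∀ i : Fin N, lo.1 ≤ i.1 → i.1 < (ν n).1 → f ml ≤ f i) ∧
          (∀ i : Fin N, (ν n).1 < i.1 → i.1 ≤ hi.1 → f mr ≤ f i) ∧
          ((f ml < f mr ∧ ν (n ++ [chir n]) = il ∧ ν (n ++ [(chir n).other]) = ir) ∨
           (f mr < f ml ∧ ν (n ++ [chir n]) = ir ∧ ν (n ++ [(chir n).other]) = il)))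


namespace Stmt17Aux

lemma mem_of_prefix (T : MergeTree) : ∀ {v u : List Chir}, u <+: v → v ∈ T.nodes → u ∈ T.nodes := by
  intro v
  induction v using List.reverseRecOn with
  | nil => intro u h hv; rwa [List.prefix_nil.mp h]
  | append_singleton w x ih =>
    intro u h hv
    rcases h with ⟨s, hs⟩
    rcases List.eq_nil_or_concat s with rfl | ⟨s', y, rfl⟩
    · rw [List.append_nil] at hs; rwa [← hs] at hv
    · have h2 : (u ++ s') ++ [y] = w ++ [x] := by
        rw [List.append_assoc]; simpa [List.concat_eq_append] using hs
      have : u ++ s' = w := (List.append_inj' h2 rfl).1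
      exact ih ⟨s', this⟩ (T.prefix_closed w x hv)

lemma list_tricho : ∀ (u v : List Chir), u <+: v ∨ v <+: u ∨
    ∃ p x y, x ≠ y ∧ p ++ [x] <+: u ∧ p ++ [y] <+: v := by
  intro u
  induction u with
  | nil => intro v; exact Or.inl (List.nil_prefix)
  | cons a u ih =>
    intro v
    cases v with
    | nil => exact Or.inr (Or.inl (List.nil_prefix))
    | cons b v =>
      by_cases hab : a = b
      · subst hab
        rcases ih v with h | h | ⟨p, x, y, hxy, hx, hy⟩
        · exact Or.inl ((List.cons_prefix_cons).mpr ⟨rfl, h⟩)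
        · exact Or.inr (Or.inl ((List.cons_prefix_cons).mpr ⟨rfl, h⟩))
        · refine Or.inr (Or.inr ⟨a :: p, x, y, hxy, ?_, ?_⟩)
          · exact (List.cons_prefix_cons).mpr ⟨rfl, hx⟩
          · exact (List.cons_prefix_cons).mpr ⟨rfl, hy⟩
      · refine Or.inr (Or.inr ⟨[], a, b, hab, ?_, ?_⟩)
        · simpa using (List.cons_prefix_cons).mpr ⟨rfl, List.nil_prefix⟩
        · simpa using (List.cons_prefix_cons).mpr ⟨rfl, List.nil_prefix⟩

lemma exists_cons_of_prefix_ne {u v : List Chir} (h : u <+: v) (hne : u ≠ v) :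
    ∃ x t, v = u ++ x :: t := by
  rcases h with ⟨s, rfl⟩
  cases s with
  | nil => simp at hne
  | cons x t => exact ⟨x, t, rfl⟩

lemma chir_cases (x c : Chir) : x = c ∨ x = c.other := by
  cases x <;> cases c <;> simp [Chir.other]

lemma leaf_or_inner (T : MergeTree) {n : List Chir} (hn : n ∈ T.nodes) :
    T.IsLeaf n ∨ T.IsInner n := by
  by_cases h : n ++ [Chir.L] ∈ T.nodes
  · exact Or.inr ⟨hn, h⟩
  · exact Or.inl ⟨hn, h⟩

lemma not_leaf_and_inner (T : MergeTree) {n : List Chir} (h1 : T.IsLeaf n) (h2 : T.IsInner n) :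
    False := h1.2 h2.2

lemma exists_leaf_left (T : MergeTree) {n : List Chir} (hn : n ∈ T.nodes) :
    ∃ k, T.IsLeaf (n ++ List.replicate k Chir.L) := by
  have hbound : ∃ k, n ++ List.replicate k Chir.L ∉ T.nodes := by
    refine ⟨(T.nodes.sup List.length) + 1, fun hmem => ?_⟩
    have h1 := Finset.le_sup (f := List.length) hmem
    rw [List.length_append, List.length_replicate] at h1
    omega
  classical
  let k0 := Nat.find hbound
  have hk0 : n ++ List.replicate k0 Chir.L ∉ T.nodes := Nat.find_spec hbound
  have hpos : 0 < k0 := by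
    rcases Nat.eq_zero_or_pos k0 with h | h
    · exfalso; apply hk0; rw [h]; simpa using hn
    · exact h
  refine ⟨k0 - 1, ?_, ?_⟩
  · exact of_not_not (Nat.find_min hbound (by omega))
  · have : (n ++ List.replicate (k0 - 1) Chir.L) ++ [Chir.L]
        = n ++ List.replicate k0 Chir.L := by
      rw [List.append_assoc, ← List.replicate_succ' (n := k0-1) (a := Chir.L)]
      congr 2
      omega
    rw [this]
    exact hk0

lemma leAux_of_prefix : ∀ (c : Chir) (p n : List Chir), p <+: n → leAux c n p := by
  intro c p
  induction p generalizing c with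
  | nil => intro n _; cases n <;> simp [leAux]
  | cons y p ih =>
    intro n hp
    cases n with
    | nil => simp at hp
    | cons x n =>
      rcases (List.cons_prefix_cons).mp hp with ⟨rfl, h⟩
      simpa [leAux] using ih y n h

lemma scLe_of_prefix {p n : List Chir} (h : p <+: n) : scLe n p :=
  leAux_of_prefix Chir.L p n h

lemma simpLe_refl (a : List Chir) : simpLe a a := Or.inl rfl

lemma not_concat_prefix_self (p : List Chir) (x : Chir) : ¬ (p ++ [x] <+: p) := by
  intro h
  have := h.length_le
  simp at this

lemma prefix_eq_of_parallel {u : List Chir} {p : List Chir} {x y : Chir}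
    (h1 : p ++ [x] <+: u) (h2 : p ++ [y] <+: u) : x = y := by
  rcases List.prefix_or_prefix_of_prefix h1 h2 with h | h
  · have := h.eq_of_length_le (by simp)
    simpa using (List.append_inj' this rfl).2
  · have := h.eq_of_length_le (by simp)
    simpa using ((List.append_inj' this rfl).2).symm

lemma between_of_leaves (T : MergeTree) {a b : List Chir}
    (ha : T.IsLeaf a) (hb : T.IsLeaf b) (hab : simpLe a b) (hne : a ≠ b) :
    ∃ c, T.IsInner c ∧ simpLe a c ∧ simpLe c b ∧ c ≠ a ∧ c ≠ b := by
  rcases hab with rfl | h | h | ⟨p, hpa, hpb⟩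
  · exact absurd rfl hne
  · exact absurd (mem_of_prefix T h ha.1) hb.2
  · exact absurd ((T.full a).mpr (mem_of_prefix T h hb.1)) ha.2
  · have hpL : p ++ [Chir.L] ∈ T.nodes := mem_of_prefix T hpa ha.1
    have hpmem : p ∈ T.nodes := T.prefix_closed p Chir.L hpL
    refine ⟨p, ⟨hpmem, hpL⟩, Or.inr (Or.inl hpa), Or.inr (Or.inr (Or.inl hpb)), ?_, ?_⟩
    · rintro rfl; exact not_concat_prefix_self p Chir.L hpa
    · rintro rfl; exact not_concat_prefix_self p Chir.R hpb

lemma between_of_inners (T : MergeTree) {a b : List Chir}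
    (ha : T.IsInner a) (hb : T.IsInner b) (hab : simpLe a b) (hne : a ≠ b) :
    ∃ c, T.IsLeaf c ∧ simpLe a c ∧ simpLe c b ∧ c ≠ a ∧ c ≠ b := by
  have haR : a ++ [Chir.R] ∈ T.nodes := (T.full a).mp ha.2
  obtain ⟨j, hcleaf⟩ := exists_leaf_left T haR
  obtain ⟨c, hcdef⟩ : ∃ c, (a ++ [Chir.R]) ++ List.replicate j Chir.L = c := ⟨_, rfl⟩
  rw [hcdef] at hcleaf
  have hac : a ++ [Chir.R] <+: c := ⟨_, hcdef⟩
  have haprefc : a <+: c := (List.prefix_append a [Chir.R]).trans hac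
  have hsac : simpLe a c := Or.inr (Or.inr (Or.inl hac))
  have hca : c ≠ a := by
    rintro rfl; exact not_concat_prefix_self c Chir.R hac
  have hcb : c ≠ b := by
    rintro rfl; exact hcleaf.2 hb.2
  refine ⟨c, hcleaf, hsac, ?_, hca, hcb⟩
  rcases hab with rfl | h | h | ⟨q, hqa, hqb⟩
  · exact absurd rfl hne
  · exact Or.inr (Or.inl (h.trans haprefc))
  · -- h : a ++ [Chir.R] <+: b
    rcases list_tricho c b with hcb' | hbc | ⟨p, x, y, hxy, hx, hy⟩
    · obtain ⟨z, t, hzt⟩ := exists_cons_of_prefix_ne hcb' hcb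
      have hz : c ++ [z] <+: b := ⟨t, by rw [hzt]; simp⟩
      cases z with
      | L => exact absurd (mem_of_prefix T hz hb.1) hcleaf.2
      | R => exact Or.inr (Or.inr (Or.inl hz))
    · obtain ⟨z, t, hzt⟩ := exists_cons_of_prefix_ne hbc (Ne.symm hcb)
      obtain ⟨u, hu⟩ := h
      have hrep : u ++ z :: t = List.replicate j Chir.L := by
        have : (a ++ [Chir.R]) ++ (u ++ z :: t) = (a ++ [Chir.R]) ++ List.replicate j Chir.L := by
          rw [← List.append_assoc, hu, ← hzt, hcdef]
        exact (List.append_inj this rfl).2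
      have hz : z = Chir.L := by
        have : z ∈ List.replicate j Chir.L := by
          rw [← hrep]; simp
        exact List.eq_of_mem_replicate this
      subst hz
      exact Or.inr (Or.inl ⟨t, by rw [hzt]; simp⟩)
    · -- diverge at p
      have key : a ++ [Chir.R] <+: p := by
        rcases List.prefix_or_prefix_of_prefix ((List.prefix_append p [x]).trans hx) hac
          with hp | hp
        · -- p <+: a ++ [Chir.R]
          rcases List.prefix_or_prefix_of_prefix hx hac with hx' | hx'
          · -- p ++ [x] <+: a ++ [Chir.R]
            have h1 : p ++ [x] <+: b := hx'.trans h
            exact absurd (prefix_eq_of_parallel h1 hy) hxy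
          · -- a ++ [Chir.R] <+: p ++ [x]
            rcases Nat.lt_or_ge p.length (a.length + 1) with hlen | hlen
            · have heq : a ++ [Chir.R] = p ++ [x] := hx'.eq_of_length_le (by simp; omega)
              have hpa' : p = a := (List.append_inj' heq.symm rfl).1
              have hxR : x = Chir.R := by
                simpa using (List.append_inj' heq.symm rfl).2
              subst hpa'
              have hyR : y = Chir.R := prefix_eq_of_parallel hy h
              exact absurd (hxR.trans hyR.symm) hxy
            · have hp' : p = a ++ [Chir.R] := hp.eq_of_length_le (by simp; omega)
              rw [hp']
        · exact hp
      obtain ⟨u, hu⟩ := key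
      have hxL : x = Chir.L := by
        obtain ⟨v, hv⟩ := hx
        have hux : (a ++ [Chir.R]) ++ (u ++ x :: v) = c := by
          rw [← List.append_assoc, hu]
          simpa using hv
        have hrep : u ++ x :: v = List.replicate j Chir.L := by
          rw [← hcdef] at hux
          exact (List.append_inj hux rfl).2
        have : x ∈ List.replicate j Chir.L := by rw [← hrep]; simp
        exact List.eq_of_mem_replicate this
      have hyR : y = Chir.R := by
        rcases chir_cases y Chir.R with h' | h'
        · exact h'
        · exfalso; apply hxy; rw [hxL, h']; rfl
      exact Or.inr (Or.inr (Or.inr ⟨p, hxL ▸ hx, hyR ▸ hy⟩))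
  · exact Or.inr (Or.inr (Or.inr ⟨q, hqa.trans haprefc, hqb⟩))


section Phi

variable {T : MergeTree} {φ : Fin (2 * T.innerCount + 1) → List Chir}

lemma phi_inj (hφ : IsSimplexIso T φ) : Function.Injective φ := by
  intro i j h
  have h1 : i ≤ j := (hφ.2.2 i j).mpr (by rw [h]; exact simpLe_refl _)
  have h2 : j ≤ i := (hφ.2.2 j i).mpr (by rw [h]; exact simpLe_refl _)
  exact le_antisymm h1 h2

lemma no_strict_between (hφ : IsSimplexIso T φ) (k : Fin (2 * T.innerCount + 1))
    (h : k.1 + 1 < 2 * T.innerCount + 1) {c : List Chir} (hc : c ∈ T.nodes)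
    (h1 : simpLe (φ k) c) (h2 : simpLe c (φ ⟨k.1 + 1, h⟩)) :
    c = φ k ∨ c = φ ⟨k.1 + 1, h⟩ := by
  obtain ⟨m, rfl⟩ := hφ.2.1 c hc
  have ha : k ≤ m := (hφ.2.2 k m).mpr h1
  have hb : m ≤ ⟨k.1 + 1, h⟩ := (hφ.2.2 m ⟨k.1 + 1, h⟩).mpr h2
  rw [Fin.le_def] at ha hb
  have hb' : m.1 ≤ k.1 + 1 := hb
  have : m.1 = k.1 ∨ m.1 = k.1 + 1 := by omega
  rcases this with h' | h'
  · left; congr 1; exact Fin.ext h'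
  · right; congr 1; exact Fin.ext h'

lemma phi_leaf_zero (hφ : IsSimplexIso T φ) :
    T.IsLeaf (φ ⟨0, by omega⟩) := by
  set z : Fin (2 * T.innerCount + 1) := ⟨0, by omega⟩
  have hmem := hφ.1 z
  rcases leaf_or_inner T hmem with h | h
  · exact h
  · exfalso
    obtain ⟨j, hleaf⟩ := exists_leaf_left T h.2
    have hpre : φ z ++ [Chir.L] <+: (φ z ++ [Chir.L]) ++ List.replicate j Chir.L := ⟨_, rfl⟩
    obtain ⟨m, hm⟩ := hφ.2.1 _ hleaf.1
    have : m ≤ z := (hφ.2.2 m z).mpr (by rw [hm]; exact Or.inr (Or.inl hpre))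
    have hz : m = z := le_antisymm this (by rw [Fin.le_def]; exact Nat.zero_le _)
    rw [hz] at hm
    have := hpre.length_le
    rw [← hm] at this
    simp at this

lemma phi_opposite (hφ : IsSimplexIso T φ) (k : Fin (2 * T.innerCount + 1))
    (h : k.1 + 1 < 2 * T.innerCount + 1) :
    (T.IsLeaf (φ k) ∧ T.IsInner (φ ⟨k.1 + 1, h⟩)) ∨
    (T.IsInner (φ k) ∧ T.IsLeaf (φ ⟨k.1 + 1, h⟩)) := by
  set k1 : Fin (2 * T.innerCount + 1) := ⟨k.1 + 1, h⟩
  have hne : φ k ≠ φ k1 := by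
    intro hh
    have := phi_inj hφ hh
    rw [Fin.ext_iff] at this
    simp [k1] at this
  have hle : simpLe (φ k) (φ k1) := (hφ.2.2 k k1).mp (by rw [Fin.le_def]; simp [k1])
  rcases leaf_or_inner T (hφ.1 k) with ha | ha <;>
    rcases leaf_or_inner T (hφ.1 k1) with hb | hb
  · exfalso
    obtain ⟨c, hcI, hc1, hc2, hc3, hc4⟩ := between_of_leaves T ha hb hle hne
    rcases no_strict_between hφ k h hcI.1 hc1 hc2 with rfl | rfl
    · exact hc3 rfl
    · exact hc4 rfl
  · exact Or.inl ⟨ha, hb⟩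
  · exact Or.inr ⟨ha, hb⟩
  · exfalso
    obtain ⟨c, hcL, hc1, hc2, hc3, hc4⟩ := between_of_inners T ha hb hle hne
    rcases no_strict_between hφ k h hcL.1 hc1 hc2 with rfl | rfl
    · exact hc3 rfl
    · exact hc4 rfl

lemma phi_leaf_iff (hφ : IsSimplexIso T φ) (k : Fin (2 * T.innerCount + 1)) :
    T.IsLeaf (φ k) ↔ k.1 % 2 = 0 := by
  obtain ⟨m, hm⟩ := k
  induction m with
  | zero => simpa using phi_leaf_zero hφ
  | succ m ih =>
    have hm' : m < 2 * T.innerCount + 1 := by omega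
    have ihm := ih hm'
    show T.IsLeaf (φ ⟨m + 1, hm⟩) ↔ (m + 1) % 2 = 0
    rcases phi_opposite hφ ⟨m, hm'⟩ hm with ⟨h1, h2⟩ | ⟨h1, h2⟩
    · have hm0 : m % 2 = 0 := ihm.mp h1
      constructor
      · intro hl; exact absurd hl (fun hl' => not_leaf_and_inner T hl' h2)
      · intro hp; exact absurd hp (by omega)
    · have hm1 : ¬ (m % 2 = 0) := fun hmp => not_leaf_and_inner T (ihm.mpr hmp) h1
      constructor
      · intro _; omega
      · intro _; exact h2

lemma phi_inner_iff (hφ : IsSimplexIso T φ) (k : Fin (2 * T.innerCount + 1)) :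
    T.IsInner (φ k) ↔ k.1 % 2 = 1 := by
  rcases leaf_or_inner T (hφ.1 k) with h | h
  · have := (phi_leaf_iff hφ k).mp h
    constructor
    · intro h'; exact absurd h' (fun h'' => not_leaf_and_inner T h h'')
    · intro h'; omega
  · have : ¬ T.IsLeaf (φ k) := fun h' => not_leaf_and_inner T h' h
    have h2 : ¬ (k.1 % 2 = 0) := fun h' => this ((phi_leaf_iff hφ k).mpr h')
    constructor
    · intro _; omega
    · intro _; exact h

lemma succ_prefix_even (hφ : IsSimplexIso T φ) (k : Fin (2 * T.innerCount + 1))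
    (h : k.1 + 1 < 2 * T.innerCount + 1) (hk : k.1 % 2 = 0) :
    φ ⟨k.1 + 1, h⟩ <+: φ k := by
  set k1 : Fin (2 * T.innerCount + 1) := ⟨k.1 + 1, h⟩
  have ha : T.IsLeaf (φ k) := (phi_leaf_iff hφ k).mpr hk
  have hb : T.IsInner (φ k1) := (phi_inner_iff hφ k1).mpr (by simp [k1]; omega)
  have hne : φ k ≠ φ k1 := by
    intro hh
    have := phi_inj hφ hh
    rw [Fin.ext_iff] at this
    simp [k1] at this
  have hle : simpLe (φ k) (φ k1) := (hφ.2.2 k k1).mp (by rw [Fin.le_def]; simp [k1])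
  rcases hle with heq | hpre | hpre | ⟨p, hp1, hp2⟩
  · exact absurd heq hne
  · exact (List.prefix_append _ _).trans hpre
  · exact absurd ((T.full (φ k)).mpr (mem_of_prefix T hpre hb.1)) ha.2
  · exfalso
    have hpL : p ++ [Chir.L] ∈ T.nodes := mem_of_prefix T hp1 ha.1
    have hpmem : p ∈ T.nodes := T.prefix_closed p Chir.L hpL
    have h1 : simpLe (φ k) p := Or.inr (Or.inl hp1)
    have h2 : simpLe p (φ k1) := Or.inr (Or.inr (Or.inl hp2))
    rcases no_strict_between hφ k h hpmem h1 h2 with rfl | rfl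
    · exact not_concat_prefix_self _ Chir.L hp1
    · exact not_concat_prefix_self _ Chir.R hp2

lemma succ_prefix_odd (hφ : IsSimplexIso T φ) (k : Fin (2 * T.innerCount + 1))
    (h : k.1 + 1 < 2 * T.innerCount + 1) (hk : k.1 % 2 = 1) :
    φ k <+: φ ⟨k.1 + 1, h⟩ := by
  set k1 : Fin (2 * T.innerCount + 1) := ⟨k.1 + 1, h⟩
  have ha : T.IsInner (φ k) := (phi_inner_iff hφ k).mpr hk
  have hb : T.IsLeaf (φ k1) := (phi_leaf_iff hφ k1).mpr (by simp [k1]; omega)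
  have hne : φ k ≠ φ k1 := by
    intro hh
    have := phi_inj hφ hh
    rw [Fin.ext_iff] at this
    simp [k1] at this
  have hle : simpLe (φ k) (φ k1) := (hφ.2.2 k k1).mp (by rw [Fin.le_def]; simp [k1])
  rcases hle with heq | hpre | hpre | ⟨p, hp1, hp2⟩
  · exact absurd heq hne
  · exact absurd (mem_of_prefix T hpre ha.1) hb.2
  · exact (List.prefix_append _ _).trans hpre
  · exfalso
    have hpL : p ++ [Chir.L] ∈ T.nodes := mem_of_prefix T hp1 ha.1
    have hpmem : p ∈ T.nodes := T.prefix_closed p Chir.L hpL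
    have h1 : simpLe (φ k) p := Or.inr (Or.inl hp1)
    have h2 : simpLe p (φ k1) := Or.inr (Or.inr (Or.inl hp2))
    rcases no_strict_between hφ k h hpmem h1 h2 with rfl | rfl
    · exact not_concat_prefix_self _ Chir.L hp1
    · exact not_concat_prefix_self _ Chir.R hp2

end Phi

section Uniq

variable {N : ℕ}

/-- dMf-style hypotheses on a function on path simplices. -/
def Dmf (f : Fin N → ℕ) : Prop :=
  Function.Injective f ∧
  ∀ i j : Fin N, i.1 % 2 = 0 → j.1 % 2 = 1 → (j.1 = i.1 + 1 ∨ i.1 = j.1 + 1) → f i < f j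

/-- The interval data attached to an inner node. -/
def Bounds (f : Fin N → ℕ) (e lo hi : Fin N) : Prop :=
  lo.1 < e.1 ∧ e.1 < hi.1 ∧
  (∀ i : Fin N, lo.1 ≤ i.1 → i.1 < e.1 → f i < f e) ∧
  (∀ i : Fin N, e.1 < i.1 → i.1 ≤ hi.1 → f i < f e) ∧
  (∀ i : Fin N, i.1 + 1 = lo.1 → f e ≤ f i) ∧
  (∀ i : Fin N, hi.1 + 1 = i.1 → f e ≤ f i)

lemma lo_even {f : Fin N → ℕ} {e lo hi : Fin N} (hf : Dmf f) (hB : Bounds f e lo hi) :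
    lo.1 % 2 = 0 := by
  by_contra h
  have h1 : lo.1 % 2 = 1 := by omega
  have hlopos : 1 ≤ lo.1 := by omega
  have hiN : lo.1 - 1 < N := by have := lo.2; omega
  set i : Fin N := ⟨lo.1 - 1, hiN⟩
  have hC : f e ≤ f i := hB.2.2.2.2.1 i (by simp [i]; omega)
  have hAd : f i < f lo := hf.2 i lo (by simp [i]; omega) h1 (Or.inl (by simp [i]; omega))
  have hA : f lo < f e := hB.2.2.1 lo le_rfl hB.1
  omega

lemma hi_even {f : Fin N → ℕ} {e lo hi : Fin N} (hf : Dmf f) (hB : Bounds f e lo hi)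
    (h : hi.1 + 1 < N) : hi.1 % 2 = 0 := by
  by_contra hh
  have h1 : hi.1 % 2 = 1 := by omega
  set i : Fin N := ⟨hi.1 + 1, h⟩
  have hD : f e ≤ f i := hB.2.2.2.2.2 i (by simp [i])
  have hAd : f i < f hi := hf.2 i hi (by simp [i]; omega) h1 (Or.inr (by simp [i]))
  have hA : f hi < f e := hB.2.2.2.1 hi hB.2.1 le_rfl
  omega

lemma lo_le {f g : Fin N → ℕ} {e lo hi lo' hi' : Fin N} (hf : Dmf f)
    (hodd : ∀ i j : Fin N, i.1 % 2 = 1 → j.1 % 2 = 1 → (f i ≤ f j ↔ g i ≤ g j))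
    (he : e.1 % 2 = 1) (hBf : Bounds f e lo hi) (hBg : Bounds g e lo' hi') :
    lo.1 ≤ lo'.1 := by
  by_contra h
  push_neg at h
  have hloE : lo.1 % 2 = 0 := lo_even hf hBf
  have hlopos : 1 ≤ lo.1 := by omega
  have hiN : lo.1 - 1 < N := by have := lo.2; omega
  set i : Fin N := ⟨lo.1 - 1, hiN⟩
  have h1 : f e ≤ f i := hBf.2.2.2.2.1 i (by simp [i]; omega)
  have h2 : g i < g e := hBg.2.2.1 i (by simp [i]; omega) (by simp [i]; have := hBf.1; omega)
  have := (hodd e i he (by simp [i]; omega)).mp h1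
  omega

lemma hi_ge {f g : Fin N → ℕ} {e lo hi lo' hi' : Fin N} (hf : Dmf f)
    (hodd : ∀ i j : Fin N, i.1 % 2 = 1 → j.1 % 2 = 1 → (f i ≤ f j ↔ g i ≤ g j))
    (he : e.1 % 2 = 1) (hBf : Bounds f e lo hi) (hBg : Bounds g e lo' hi') :
    hi'.1 ≤ hi.1 := by
  by_contra h
  push_neg at h
  have hN : hi.1 + 1 < N := by have := hi'.2; omega
  have hhiE : hi.1 % 2 = 0 := hi_even hf hBf hN
  set i : Fin N := ⟨hi.1 + 1, hN⟩
  have h1 : f e ≤ f i := hBf.2.2.2.2.2 i (by simp [i])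
  have h2 : g i < g e := hBg.2.2.2.1 i (by simp [i]; have := hBf.2.1; omega) (by simp [i]; omega)
  have := (hodd e i he (by simp [i]; omega)).mp h1
  omega

lemma max_odd_left {f : Fin N → ℕ} {e lo il : Fin N} (hf : Dmf f)
    (hlo : lo.1 % 2 = 0) (hlt : lo.1 + 1 < e.1) (hil1 : lo.1 ≤ il.1) (hil2 : il.1 < e.1)
    (hmax : ∀ i : Fin N, lo.1 ≤ i.1 → i.1 < e.1 → f i ≤ f il) : il.1 % 2 = 1 := by
  by_contra hh
  have hilE : il.1 % 2 = 0 := by omega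
  rcases Nat.lt_or_ge (il.1 + 1) e.1 with hc | hc
  · set i : Fin N := ⟨il.1 + 1, by have := e.2; omega⟩
    have := hf.2 il i hilE (by simp [i]; omega) (Or.inl (by simp [i]))
    have := hmax i (by simp [i]; omega) (by simp [i]; omega)
    omega
  · have hileq : il.1 + 1 = e.1 := by omega
    have hilpos : 1 ≤ il.1 := by omega
    set i : Fin N := ⟨il.1 - 1, by have := il.2; omega⟩
    have := hf.2 il i hilE (by simp [i]; omega) (Or.inr (by simp [i]; omega))
    have := hmax i (by simp [i]; omega) (by simp [i]; omega)
    omega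

lemma max_odd_right {f : Fin N → ℕ} {e hi ir : Fin N} (hf : Dmf f)
    (he : e.1 % 2 = 1) (hlt : e.1 + 1 < hi.1) (hir1 : e.1 < ir.1) (hir2 : ir.1 ≤ hi.1)
    (hmax : ∀ i : Fin N, e.1 < i.1 → i.1 ≤ hi.1 → f i ≤ f ir) : ir.1 % 2 = 1 := by
  by_contra hh
  have hirE : ir.1 % 2 = 0 := by omega
  rcases Nat.lt_or_ge (e.1 + 1) ir.1 with hc | hc
  · set i : Fin N := ⟨ir.1 - 1, by have := ir.2; omega⟩
    have := hf.2 ir i hirE (by simp [i]; omega) (Or.inr (by simp [i]; omega))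
    have := hmax i (by simp [i]; omega) (by simp [i]; omega)
    omega
  · have hireq : ir.1 = e.1 + 1 := by omega
    set i : Fin N := ⟨ir.1 + 1, by have := hi.2; omega⟩
    have := hf.2 ir i hirE (by simp [i]; omega) (Or.inl (by simp [i]))
    have := hmax i (by simp [i]; omega) (by simp [i]; omega)
    omega

lemma min_even_left {f : Fin N → ℕ} {e lo ml : Fin N} (hf : Dmf f)
    (hlo : lo.1 % 2 = 0) (hml1 : lo.1 ≤ ml.1) (hml2 : ml.1 < e.1)
    (hmin : ∀ i : Fin N, lo.1 ≤ i.1 → i.1 < e.1 → f ml ≤ f i) : ml.1 % 2 = 0 := by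
  by_contra hh
  have hmlO : ml.1 % 2 = 1 := by omega
  have hpos : lo.1 + 1 ≤ ml.1 := by omega
  set i : Fin N := ⟨ml.1 - 1, by have := ml.2; omega⟩
  have := hf.2 i ml (by simp [i]; omega) hmlO (Or.inl (by simp [i]; omega))
  have := hmin i (by simp [i]; omega) (by simp [i]; omega)
  omega

lemma min_even_right {f : Fin N → ℕ} {e hi mr : Fin N} (hf : Dmf f)
    (he : e.1 % 2 = 1) (hmr1 : e.1 < mr.1) (hmr2 : mr.1 ≤ hi.1)
    (hmin : ∀ i : Fin N, e.1 < i.1 → i.1 ≤ hi.1 → f mr ≤ f i) : mr.1 % 2 = 0 := by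
  by_contra hh
  have hmrO : mr.1 % 2 = 1 := by omega
  rcases Nat.lt_or_ge mr.1 hi.1 with hc | hc
  · set i : Fin N := ⟨mr.1 + 1, by have := hi.2; omega⟩
    have := hf.2 i mr (by simp [i]; omega) hmrO (Or.inr (by simp [i]))
    have := hmin i (by simp [i]; omega) (by simp [i]; omega)
    omega
  · have hmreq : mr.1 = hi.1 := by omega
    have hge : e.1 + 2 ≤ mr.1 := by omega
    set i : Fin N := ⟨mr.1 - 1, by have := mr.2; omega⟩
    have := hf.2 i mr (by simp [i]; omega) hmrO (Or.inl (by simp [i]; omega))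
    have := hmin i (by simp [i]; omega) (by simp [i]; omega)
    omega

end Uniq

section Main

variable {N : ℕ}

lemma inner_step {f g : Fin N → ℕ} (hf : Dmf f) (hg : Dmf g)
    (hodd : ∀ i j : Fin N, i.1 % 2 = 1 → j.1 % 2 = 1 → (f i ≤ f j ↔ g i ≤ g j))
    (heven : ∀ i j : Fin N, i.1 % 2 = 0 → j.1 % 2 = 0 → (f i ≤ f j ↔ g i ≤ g j))
    {T₁ T₂ : MergeTree} {ν₁ ν₂ : List Chir → Fin N}
    (h1 : InducedMlPath f T₁ ν₁) (h2 : InducedMlPath g T₂ ν₂)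
    {w : List Chir} (hw1 : T₁.IsInner w) (hw2 : T₂.IsInner w) (hνw : ν₁ w = ν₂ w) :
    ν₁ (w ++ [chir w]) = ν₂ (w ++ [chir w]) ∧
    ν₁ (w ++ [(chir w).other]) = ν₂ (w ++ [(chir w).other]) := by
  obtain ⟨he1, lo, hi, hlo, hhi, hA, hB, hC, hD, il, ir, hil1, hil2, hir1, hir2, hmaxl,
    hmaxr, ml, mr, hml1, hml2, hmr1, hmr2, hminl, hminr, hbr⟩ := h1.2.2.2.2 w hw1
  obtain ⟨he2, lo', hi', hlo', hhi', hA', hB', hC', hD', il', ir', hil1', hil2', hir1',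
    hir2', hmaxl', hmaxr', ml', mr', hml1', hml2', hmr1', hmr2', hminl', hminr', hbr'⟩ :=
      h2.2.2.2.2 w hw2
  rw [← hνw] at he2 hlo' hhi' hA' hB' hC' hD' hil2' hir1' hmaxl' hmaxr' hml2' hmr1' hminl' hminr'
  set e := ν₁ w with hedef
  have hBf : Bounds f e lo hi := ⟨hlo, hhi, hA, hB, hC, hD⟩
  have hBg : Bounds g e lo' hi' := ⟨hlo', hhi', hA', hB', hC', hD'⟩
  have hodd' : ∀ i j : Fin N, i.1 % 2 = 1 → j.1 % 2 = 1 → (g i ≤ g j ↔ f i ≤ f j) :=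
    fun i j hi' hj' => (hodd i j hi' hj').symm
  have heven' : ∀ i j : Fin N, i.1 % 2 = 0 → j.1 % 2 = 0 → (g i ≤ g j ↔ f i ≤ f j) :=
    fun i j hi' hj' => (heven i j hi' hj').symm
  have hloeq : lo = lo' :=
    Fin.ext (le_antisymm (lo_le hf hodd he1 hBf hBg) (lo_le hg hodd' he1 hBg hBf))
  have hhieq : hi = hi' :=
    Fin.ext (le_antisymm (hi_ge hg hodd' he1 hBg hBf) (hi_ge hf hodd he1 hBf hBg))
  subst hloeq
  subst hhieq
  have hloE : lo.1 % 2 = 0 := lo_even hf hBf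
  -- il = il'
  have hileq : il = il' := by
    rcases Nat.lt_or_ge (lo.1 + 1) e.1 with hc | hc
    · have ho1 : il.1 % 2 = 1 := max_odd_left hf hloE hc hil1 hil2 hmaxl
      have ho2 : il'.1 % 2 = 1 := max_odd_left hg hloE hc hil1' hil2' hmaxl'
      have h1' : f il' ≤ f il := hmaxl il' hil1' hil2'
      have h2' : g il ≤ g il' := hmaxl' il hil1 hil2
      have h3 : f il ≤ f il' := (hodd il il' ho1 ho2).mpr h2'
      exact hf.1 (le_antisymm h3 h1')
    · have : il.1 = lo.1 := by omega
      have : il'.1 = lo.1 := by omega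
      exact Fin.ext (by omega)
  have hireq : ir = ir' := by
    rcases Nat.lt_or_ge (e.1 + 1) hi.1 with hc | hc
    · have ho1 : ir.1 % 2 = 1 := max_odd_right hf he1 hc hir1 hir2 hmaxr
      have ho2 : ir'.1 % 2 = 1 := max_odd_right hg he1 hc hir1' hir2' hmaxr'
      have h1' : f ir' ≤ f ir := hmaxr ir' hir1' hir2'
      have h2' : g ir ≤ g ir' := hmaxr' ir hir1 hir2
      have h3 : f ir ≤ f ir' := (hodd ir ir' ho1 ho2).mpr h2'
      exact hf.1 (le_antisymm h3 h1')
    · have : ir.1 = hi.1 := by omega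
      have : ir'.1 = hi.1 := by omega
      exact Fin.ext (by omega)
  have hmleq : ml = ml' := by
    have ho1 : ml.1 % 2 = 0 := min_even_left hf hloE hml1 hml2 hminl
    have ho2 : ml'.1 % 2 = 0 := min_even_left hg hloE hml1' hml2' hminl'
    have h1' : f ml ≤ f ml' := hminl ml' hml1' hml2'
    have h2' : g ml' ≤ g ml := hminl' ml hml1 hml2
    have h3 : f ml' ≤ f ml := (heven ml' ml ho2 ho1).mpr h2'
    exact hf.1 (le_antisymm h1' h3)
  have hmreq : mr = mr' := by
    have ho1 : mr.1 % 2 = 0 := min_even_right hf he1 hmr1 hmr2 hminr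
    have ho2 : mr'.1 % 2 = 0 := min_even_right hg he1 hmr1' hmr2' hminr'
    have h1' : f mr ≤ f mr' := hminr mr' hmr1' hmr2'
    have h2' : g mr' ≤ g mr := hminr' mr hmr1 hmr2
    have h3 : f mr' ≤ f mr := (heven mr' mr ho2 ho1).mpr h2'
    exact hf.1 (le_antisymm h1' h3)
  subst hileq
  subst hireq
  subst hmleq
  subst hmreq
  have hmlE : ml.1 % 2 = 0 := min_even_left hf hloE hml1 hml2 hminl
  have hmrE : mr.1 % 2 = 0 := min_even_right hf he1 hmr1 hmr2 hminr
  have hiff : f ml ≤ f mr ↔ g ml ≤ g mr := heven ml mr hmlE hmrE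
  rcases hbr with ⟨hlt, hc1, hc2⟩ | ⟨hlt, hc1, hc2⟩ <;>
    rcases hbr' with ⟨hlt', hc1', hc2'⟩ | ⟨hlt', hc1', hc2'⟩
  · exact ⟨hc1.trans hc1'.symm, hc2.trans hc2'.symm⟩
  · exact absurd (hiff.mp hlt.le) (by omega)
  · exact absurd (hiff.mpr hlt'.le) (by omega)
  · exact ⟨hc1.trans hc1'.symm, hc2.trans hc2'.symm⟩

lemma root_nu_eq {f g : Fin N → ℕ} (hf : Dmf f) (hg : Dmf g)
    (hodd : ∀ i j : Fin N, i.1 % 2 = 1 → j.1 % 2 = 1 → (f i ≤ f j ↔ g i ≤ g j))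
    {T₁ T₂ : MergeTree} {ν₁ ν₂ : List Chir → Fin N}
    (h1 : InducedMlPath f T₁ ν₁) (h2 : InducedMlPath g T₂ ν₂) :
    ν₁ [] = ν₂ [] := by
  by_cases hex : ∃ i : Fin N, i.1 % 2 = 1
  · obtain ⟨hI1, hmax1⟩ := h1.2.2.1 hex
    obtain ⟨hI2, hmax2⟩ := h2.2.2.1 hex
    have ho1 : (ν₁ []).1 % 2 = 1 := (h1.2.2.2.2 [] hI1).1
    have ho2 : (ν₂ []).1 % 2 = 1 := (h2.2.2.2.2 [] hI2).1
    have ha : f (ν₂ []) ≤ f (ν₁ []) := hmax1 _ ho2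
    have hb : g (ν₁ []) ≤ g (ν₂ []) := hmax2 _ ho1
    have hc : f (ν₁ []) ≤ f (ν₂ []) := (hodd _ _ ho1 ho2).mpr hb
    exact hf.1 (le_antisymm hc ha)
  · have hN : N = 1 := by
      have hpos : 0 < N := (ν₁ []).pos
      by_contra hne
      exact hex ⟨⟨1, by omega⟩, rfl⟩
    have h1' := (ν₁ []).2
    have h2' := (ν₂ []).2
    exact Fin.ext (by omega)

lemma induced_subset {f g : Fin N → ℕ} (hf : Dmf f) (hg : Dmf g)
    (hodd : ∀ i j : Fin N, i.1 % 2 = 1 → j.1 % 2 = 1 → (f i ≤ f j ↔ g i ≤ g j))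
    (heven : ∀ i j : Fin N, i.1 % 2 = 0 → j.1 % 2 = 0 → (f i ≤ f j ↔ g i ≤ g j))
    {T₁ T₂ : MergeTree} {ν₁ ν₂ : List Chir → Fin N}
    (h1 : InducedMlPath f T₁ ν₁) (h2 : InducedMlPath g T₂ ν₂) :
    ∀ n : List Chir, n ∈ T₁.nodes → n ∈ T₂.nodes ∧ ν₁ n = ν₂ n := by
  intro n
  induction n using List.reverseRecOn with
  | nil => exact fun _ => ⟨T₂.root_mem, root_nu_eq hf hg hodd h1 h2⟩
  | append_singleton w x ih =>
    intro hn
    have hw1 : w ∈ T₁.nodes := T₁.prefix_closed w x hn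
    have hwL : w ++ [Chir.L] ∈ T₁.nodes := by
      cases x
      · exact hn
      · exact (T₁.full w).mpr hn
    have hwI1 : T₁.IsInner w := ⟨hw1, hwL⟩
    obtain ⟨hw2, hνw⟩ := ih hw1
    have hoddw : (ν₁ w).1 % 2 = 1 := (h1.2.2.2.2 w hwI1).1
    have hnl2 : ¬ T₂.IsLeaf w := by
      intro hl
      have := (h2.2.1 w hw2).mp hl
      rw [← hνw] at this
      omega
    have hwI2 : T₂.IsInner w := (leaf_or_inner T₂ hw2).resolve_left hnl2
    have hmem2 : w ++ [x] ∈ T₂.nodes := by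
      cases x
      · exact hwI2.2
      · exact (T₂.full w).mp hwI2.2
    obtain ⟨hc1, hc2⟩ := inner_step hf hg hodd heven h1 h2 hwI1 hwI2 hνw
    refine ⟨hmem2, ?_⟩
    rcases chir_cases x (chir w) with rfl | rfl
    · exact hc1
    · exact hc2

lemma induced_nodes_eq {f g : Fin N → ℕ} (hf : Dmf f) (hg : Dmf g)
    (hodd : ∀ i j : Fin N, i.1 % 2 = 1 → j.1 % 2 = 1 → (f i ≤ f j ↔ g i ≤ g j))
    (heven : ∀ i j : Fin N, i.1 % 2 = 0 → j.1 % 2 = 0 → (f i ≤ f j ↔ g i ≤ g j))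
    {T₁ T₂ : MergeTree} {ν₁ ν₂ : List Chir → Fin N}
    (h1 : InducedMlPath f T₁ ν₁) (h2 : InducedMlPath g T₂ ν₂) :
    T₁.nodes = T₂.nodes := by
  have hodd' : ∀ i j : Fin N, i.1 % 2 = 1 → j.1 % 2 = 1 → (g i ≤ g j ↔ f i ≤ f j) :=
    fun i j hi' hj' => (hodd i j hi' hj').symm
  have heven' : ∀ i j : Fin N, i.1 % 2 = 0 → j.1 % 2 = 0 → (g i ≤ g j ↔ f i ≤ f j) :=
    fun i j hi' hj' => (heven i j hi' hj').symm
  ext n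
  constructor
  · exact fun hn => (induced_subset hf hg hodd heven h1 h2 n hn).1
  · exact fun hn => (induced_subset hg hf hodd' heven' h2 h1 n hn).1

end Main

end Stmt17Aux

/-- The induced index-ordered dMf and the induced sublevel-connected dMf on the path
with `i(T)` 1-simplices are shuffle-equivalent (they have the same critical simplices
— all of them — and induce the same orders on 0-simplices and on 1-simplices);
consequently their induced merge trees are isomorphic. -/
theorem stmt17 (T : MergeTree) (labio labsc : List Chir → ℕ)
    (hio : IsMorseLabeling T (ioLe T) labio) (hsc : IsMorseLabeling T scLe labsc)
    (φ : Fin (2 * T.innerCount + 1) → List Chir) (hφ : IsSimplexIso T φ) :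
    (∀ i j : Fin (2 * T.innerCount + 1), i.1 % 2 = 0 → j.1 % 2 = 0 →
        (labio (φ i) ≤ labio (φ j) ↔ labsc (φ i) ≤ labsc (φ j))) ∧
    (∀ i j : Fin (2 * T.innerCount + 1), i.1 % 2 = 1 → j.1 % 2 = 1 →
        (labio (φ i) ≤ labio (φ j) ↔ labsc (φ i) ≤ labsc (φ j))) ∧
    (∀ (T₁ T₂ : MergeTree) (ν₁ ν₂ : List Chir → Fin (2 * T.innerCount + 1)),
        InducedMlPath (fun i => labio (φ i)) T₁ ν₁ →
        InducedMlPath (fun i => labsc (φ i)) T₂ ν₂ → T₁.nodes = T₂.nodes) := by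
  classical
  have hinj_io : ∀ i j, labio (φ i) = labio (φ j) → i = j := fun i j h =>
    Stmt17Aux.phi_inj hφ (hio.2.2.1 _ (hφ.1 i) _ (hφ.1 j) h)
  have hinj_sc : ∀ i j, labsc (φ i) = labsc (φ j) → i = j := fun i j h =>
    Stmt17Aux.phi_inj hφ (hsc.2.2.1 _ (hφ.1 i) _ (hφ.1 j) h)
  have heven : ∀ i j : Fin (2 * T.innerCount + 1), i.1 % 2 = 0 → j.1 % 2 = 0 →
      (labio (φ i) ≤ labio (φ j) ↔ labsc (φ i) ≤ labsc (φ j)) := by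
    intro i j hi hj
    have hli : T.IsLeaf (φ i) := (Stmt17Aux.phi_leaf_iff hφ i).mpr hi
    have hlj : T.IsLeaf (φ j) := (Stmt17Aux.phi_leaf_iff hφ j).mpr hj
    have h1 := hio.2.2.2 (φ i) (hφ.1 i) (φ j) (hφ.1 j)
    have h2 := hsc.2.2.2 (φ i) (hφ.1 i) (φ j) (hφ.1 j)
    rw [← h1, ← h2]
    constructor
    · rintro (⟨_, hin⟩ | ⟨_, hs⟩)
      · exact absurd hin (fun h => Stmt17Aux.not_leaf_and_inner T hlj h)
      · exact hs
    · intro hs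
      exact Or.inr ⟨Or.inl ⟨hli, hlj⟩, hs⟩
  have hodd : ∀ i j : Fin (2 * T.innerCount + 1), i.1 % 2 = 1 → j.1 % 2 = 1 →
      (labio (φ i) ≤ labio (φ j) ↔ labsc (φ i) ≤ labsc (φ j)) := by
    intro i j hi hj
    have hli : T.IsInner (φ i) := (Stmt17Aux.phi_inner_iff hφ i).mpr hi
    have hlj : T.IsInner (φ j) := (Stmt17Aux.phi_inner_iff hφ j).mpr hj
    have h1 := hio.2.2.2 (φ i) (hφ.1 i) (φ j) (hφ.1 j)
    have h2 := hsc.2.2.2 (φ i) (hφ.1 i) (φ j) (hφ.1 j)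
    rw [← h1, ← h2]
    constructor
    · rintro (⟨hlf, _⟩ | ⟨_, hs⟩)
      · exact absurd hlf (fun h => Stmt17Aux.not_leaf_and_inner T h hli)
      · exact hs
    · intro hs
      exact Or.inr ⟨Or.inr ⟨hli, hlj⟩, hs⟩
  refine ⟨heven, hodd, ?_⟩
  intro T₁ T₂ ν₁ ν₂ h1 h2
  have hf : Stmt17Aux.Dmf (fun i => labio (φ i)) := by
    refine ⟨fun i j h => hinj_io i j h, ?_⟩
    intro i j hi hj _
    have hli : T.IsLeaf (φ i) := (Stmt17Aux.phi_leaf_iff hφ i).mpr hi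
    have hlj : T.IsInner (φ j) := (Stmt17Aux.phi_inner_iff hφ j).mpr hj
    have hle : labio (φ i) ≤ labio (φ j) :=
      (hio.2.2.2 (φ i) (hφ.1 i) (φ j) (hφ.1 j)).mp (Or.inl ⟨hli, hlj⟩)
    refine lt_of_le_of_ne hle (fun h => ?_)
    have := hinj_io i j h
    rw [Fin.ext_iff] at this
    omega
  have hg : Stmt17Aux.Dmf (fun i => labsc (φ i)) := by
    refine ⟨fun i j h => hinj_sc i j h, ?_⟩
    intro i j hi hj hadj
    have hpre : φ j <+: φ i := by
      rcases hadj with hadj | hadj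
      · have hj' : j = ⟨i.1 + 1, by omega⟩ := Fin.ext hadj
        rw [hj']
        exact Stmt17Aux.succ_prefix_even hφ i (by have := j.2; omega) hi
      · have hi' : i = ⟨j.1 + 1, by omega⟩ := Fin.ext hadj
        rw [hi']
        exact Stmt17Aux.succ_prefix_odd hφ j (by have := i.2; omega) hj
    have hle : labsc (φ i) ≤ labsc (φ j) :=
      (hsc.2.2.2 (φ i) (hφ.1 i) (φ j) (hφ.1 j)).mp (Stmt17Aux.scLe_of_prefix hpre)
    refine lt_of_le_of_ne hle (fun h => ?_)
    have := hinj_sc i j h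
    rw [Fin.ext_iff] at this
    omega
  exact Stmt17Aux.induced_nodes_eq hf hg hodd heven h1 h2
end
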